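/- The FISTA iterates satisfy, for every k ≥ 1, F(x_k) − F(x_*) ≤ θ_{k−1}²·(1/μ)·(F(x_0) − F(x_*)). -/

import Mathlib

open scoped RealInnerProductSpace

set_option maxHeartbeats 1000000

section Aux

variable {n : ℕ}

lemma N_nonneg (v : Fin n → ℝ) (hv : ∀ i, 0 < v i) (w : EuclideanSpace ℝ (Fin n)) :
    0 ≤ ∑ i, v i * (w i) ^ 2 :=
  Finset.sum_nonneg fun i _ => mul_nonneg (hv i).le (sq_nonneg _)

lemma N_combo (v : Fin n → ℝ) (a b : EuclideanSpace ℝ (Fin n)) (t : ℝ) :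
    ∑ i, v i * (((1 - t) • a + t • b) i) ^ 2
      = (1 - t) * ∑ i, v i * (a i) ^ 2 + t * ∑ i, v i * (b i) ^ 2
          - t * (1 - t) * ∑ i, v i * ((a - b) i) ^ 2 := by
  simp only [PiLp.add_apply, PiLp.smul_apply, PiLp.sub_apply, smul_eq_mul, Finset.mul_sum]
  rw [← Finset.sum_add_distrib, ← Finset.sum_sub_distrib]
  exact Finset.sum_congr rfl fun i _ => by ring

lemma N_smul (v : Fin n → ℝ) (w : EuclideanSpace ℝ (Fin n)) (t : ℝ) :
    ∑ i, v i * ((t • w) i) ^ 2 = t ^ 2 * ∑ i, v i * (w i) ^ 2 := by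
  simp only [PiLp.smul_apply, smul_eq_mul, Finset.mul_sum]
  exact Finset.sum_congr rfl fun i _ => by ring

lemma N_sub_comm (v : Fin n → ℝ) (a b : EuclideanSpace ℝ (Fin n)) :
    ∑ i, v i * ((a - b) i) ^ 2 = ∑ i, v i * ((b - a) i) ^ 2 := by
  simp only [PiLp.sub_apply]
  exact Finset.sum_congr rfl fun i _ => by ring

lemma strongmin_aux {N D : ℝ} (hN : 0 ≤ N)
    (h : ∀ t : ℝ, 0 < t → t < 1 → (1 - t) / 2 * N ≤ D) : N / 2 ≤ D := by
  by_contra hc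
  push_neg at hc
  have h2 := h (1/2) (by norm_num) (by norm_num)
  have hNpos : 0 < N := by nlinarith
  have ht0 : 0 < (N - 2 * D) / (2 * N) := by
    apply div_pos (by nlinarith) (by nlinarith)
  have ht1 : (N - 2 * D) / (2 * N) < 1 := by
    rw [div_lt_one (by nlinarith)]; nlinarith
  have hfin := h _ ht0 ht1
  have h4 : (1 - (N - 2 * D) / (2 * N)) / 2 * N = (N + 2 * D) / 4 := by
    field_simp
    ring
  rw [h4] at hfin
  linarith

lemma grad_ineq (f : EuclideanSpace ℝ (Fin n) → ℝ) (hconv : ConvexOn ℝ Set.univ f)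
    (gy y u : EuclideanSpace ℝ (Fin n)) (hg : HasGradientAt f gy y) :
    f y + ⟪gy, u - y⟫ ≤ f u := by
  have hF := hasGradientAt_iff_hasFDerivAt.mp hg
  have hline : HasDerivAt (fun t : ℝ => y + t • (u - y)) (u - y) 0 := by
    simpa using ((hasDerivAt_id (0 : ℝ)).smul_const (u - y)).const_add y
  have h0 : y + (0 : ℝ) • (u - y) = y := by simp
  have hφ : HasDerivAt (fun t : ℝ => f (y + t • (u - y))) ⟪gy, u - y⟫ 0 := by
    have hF' : HasFDerivAt f (InnerProductSpace.toDual ℝ _ gy) (y + (0:ℝ) • (u - y)) := by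
      rw [h0]; exact hF
    have := hF'.comp_hasDerivAt (0 : ℝ) hline
    simpa [InnerProductSpace.toDual_apply_apply, Function.comp_def] using this
  have hmono : nhdsWithin (0:ℝ) (Set.Ioi 0) ≤ nhdsWithin (0:ℝ) {(0:ℝ)}ᶜ :=
    nhdsWithin_mono _ (fun t ht => by
      simp only [Set.mem_compl_iff, Set.mem_singleton_iff]
      exact ne_of_gt ht)
  have hslope := (hasDerivAt_iff_tendsto_slope.mp hφ).mono_left hmono
  have hev : ∀ᶠ t in nhdsWithin (0:ℝ) (Set.Ioi 0),
      slope (fun t : ℝ => f (y + t • (u - y))) 0 t ≤ f u - f y := by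
    filter_upwards [Ioo_mem_nhdsGT_of_mem (Set.left_mem_Ico.mpr one_pos)] with t ht
    have hcomb : y + t • (u - y) = (1 - t) • y + t • u := by module
    have hcx : f ((1 - t) • y + t • u) ≤ (1 - t) * f y + t * f u :=
      hconv.2 (Set.mem_univ y) (Set.mem_univ u) (by linarith [ht.2]) ht.1.le (by ring)
    have hs : slope (fun t : ℝ => f (y + t • (u - y))) 0 t
        = (f (y + t • (u - y)) - f y) / t := by
      rw [slope_def_field, h0]
      norm_num
    rw [hs, div_le_iff₀ ht.1, hcomb]
    nlinarith [hcx]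
  linarith [le_of_tendsto hslope hev]

lemma strong_min (v : Fin n → ℝ) (hv : ∀ i, 0 < v i)
    (ψ : EuclideanSpace ℝ (Fin n) → ℝ) (hψ : ConvexOn ℝ Set.univ ψ)
    (c yk xp : EuclideanSpace ℝ (Fin n))
    (hmin : ∀ u : EuclideanSpace ℝ (Fin n),
      ⟪c, xp - yk⟫ + (1 / 2) * (∑ i, v i * ((xp - yk) i) ^ 2) + ψ xp
        ≤ ⟪c, u - yk⟫ + (1 / 2) * (∑ i, v i * ((u - yk) i) ^ 2) + ψ u)
    (u : EuclideanSpace ℝ (Fin n)) :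
    ⟪c, xp - yk⟫ + (1 / 2) * (∑ i, v i * ((xp - yk) i) ^ 2) + ψ xp
        + (1 / 2) * ∑ i, v i * ((u - xp) i) ^ 2
      ≤ ⟪c, u - yk⟫ + (1 / 2) * (∑ i, v i * ((u - yk) i) ^ 2) + ψ u := by
  have key : ∀ t : ℝ, 0 < t → t < 1 →
      (1 - t) / 2 * (∑ i, v i * ((u - xp) i) ^ 2)
        ≤ (⟪c, u - yk⟫ + (1 / 2) * (∑ i, v i * ((u - yk) i) ^ 2) + ψ u)
          - (⟪c, xp - yk⟫ + (1 / 2) * (∑ i, v i * ((xp - yk) i) ^ 2) + ψ xp) := by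
    intro t ht0 ht1
    have h1 := hmin ((1 - t) • xp + t • u)
    have hψm : ψ ((1 - t) • xp + t • u) ≤ (1 - t) * ψ xp + t * ψ u :=
      hψ.2 (Set.mem_univ xp) (Set.mem_univ u) (by linarith) ht0.le (by ring)
    have hm : ((1 - t) • xp + t • u) - yk = (1 - t) • (xp - yk) + t • (u - yk) := by module
    have hNm : ∑ i, v i * ((((1 - t) • xp + t • u) - yk) i) ^ 2
        = (1 - t) * ∑ i, v i * ((xp - yk) i) ^ 2 + t * ∑ i, v i * ((u - yk) i) ^ 2
          - t * (1 - t) * ∑ i, v i * ((u - xp) i) ^ 2 := by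
      rw [hm, N_combo]
      have e : (xp - yk) - (u - yk) = xp - u := by module
      rw [e, show (∑ i, v i * ((xp - u) i) ^ 2) = ∑ i, v i * ((u - xp) i) ^ 2 from
        N_sub_comm v xp u]
    have hinner : ⟪c, ((1 - t) • xp + t • u) - yk⟫
        = (1 - t) * ⟪c, xp - yk⟫ + t * ⟪c, u - yk⟫ := by
      rw [hm, inner_add_right, real_inner_smul_right, real_inner_smul_right]
    rw [hinner, hNm] at h1
    have ht0' : 0 < t := ht0
    nlinarith [h1, hψm]
  have := strongmin_aux (N_nonneg v hv (u - xp)) key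
  linarith

end Aux

theorem stmt_6 {n : ℕ} (hn : 1 ≤ n)
    (v : Fin n → ℝ) (hv : ∀ i, 0 < v i)
    (f ψ F : EuclideanSpace ℝ (Fin n) → ℝ)
    (g : EuclideanSpace ℝ (Fin n) → EuclideanSpace ℝ (Fin n))
    (hfconv : ConvexOn ℝ Set.univ f)
    (hgrad : ∀ x, HasGradientAt f (g x) x)
    (hdesc : ∀ x h : EuclideanSpace ℝ (Fin n),
      f (x + h) ≤ f x + ⟪g x, h⟫ + (1 / 2) * ∑ i, v i * (h i) ^ 2)
    (hψconv : ConvexOn ℝ Set.univ ψ)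
    (hF : ∀ x, F x = f x + ψ x)
    (xstar : EuclideanSpace ℝ (Fin n)) (hxstar : ∀ x, F xstar ≤ F x)
    (x y z : ℕ → EuclideanSpace ℝ (Fin n)) (θ : ℕ → ℝ)
    (hθinit : θ 0 = 1) (hzinit : z 0 = x 0)
    (hy : ∀ k, y k = (1 - θ k) • x k + θ k • z k)
    (hxmin : ∀ k, ∀ u : EuclideanSpace ℝ (Fin n),
      ⟪g (y k), x (k + 1) - y k⟫ + (1 / 2) * (∑ i, v i * ((x (k + 1) - y k) i) ^ 2)
          + ψ (x (k + 1))
        ≤ ⟪g (y k), u - y k⟫ + (1 / 2) * (∑ i, v i * ((u - y k) i) ^ 2) + ψ u)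
    (hz : ∀ k, z (k + 1) = z k + (θ k)⁻¹ • (x (k + 1) - y k))
    (hθrec : ∀ k : ℕ, θ (k + 1) = (Real.sqrt ((θ k) ^ 4 + 4 * (θ k) ^ 2) - (θ k) ^ 2) / 2)
    (μ : ℝ) (hμ : 0 < μ)
    (hsc : ∀ u : EuclideanSpace ℝ (Fin n),
      F xstar + (μ / 2) * ∑ i, v i * ((u - xstar) i) ^ 2 ≤ F u) :
    ∀ k : ℕ, 1 ≤ k →
      F (x k) - F xstar ≤ (θ (k - 1)) ^ 2 * (1 / μ) * (F (x 0) - F xstar) := by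
  -- θ is in (0, 1]
  have hθ : ∀ k, 0 < θ k ∧ θ k ≤ 1 := by
    intro k
    induction k with
    | zero => rw [hθinit]; norm_num
    | succ k ih =>
      have hs2 : (Real.sqrt ((θ k) ^ 4 + 4 * (θ k) ^ 2)) ^ 2 = (θ k) ^ 4 + 4 * (θ k) ^ 2 :=
        Real.sq_sqrt (by positivity)
      have hs0 : 0 ≤ Real.sqrt ((θ k) ^ 4 + 4 * (θ k) ^ 2) := Real.sqrt_nonneg _
      rw [hθrec k]
      constructor
      · nlinarith [ih.1, mul_pos ih.1 ih.1]
      · nlinarith [ih.1, mul_pos ih.1 ih.1]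
  have hθsq : ∀ k, (θ (k + 1)) ^ 2 = (θ k) ^ 2 * (1 - θ (k + 1)) := by
    intro k
    have hs2 : (Real.sqrt ((θ k) ^ 4 + 4 * (θ k) ^ 2)) ^ 2 = (θ k) ^ 4 + 4 * (θ k) ^ 2 :=
      Real.sq_sqrt (by positivity)
    rw [hθrec k]
    linear_combination hs2 / 4
  have hFconv : ConvexOn ℝ Set.univ F := by
    rw [show F = fun x => f x + ψ x from funext hF]
    exact hfconv.add hψconv
  -- key one-step inequality
  have key : ∀ k, F (x (k + 1)) - F xstar ≤ (1 - θ k) * (F (x k) - F xstar)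
      + (θ k) ^ 2 * (1 / 2) * (∑ i, v i * ((xstar - z k) i) ^ 2)
      - (θ k) ^ 2 * (1 / 2) * (∑ i, v i * ((xstar - z (k + 1)) i) ^ 2) := by
    intro k
    obtain ⟨hθ0, hθ1⟩ := hθ k
    set u := (1 - θ k) • x k + θ k • xstar with hu
    have hde : f (x (k + 1)) ≤ f (y k) + ⟪g (y k), x (k + 1) - y k⟫
        + (1 / 2) * ∑ i, v i * ((x (k + 1) - y k) i) ^ 2 := by
      have := hdesc (y k) (x (k + 1) - y k)
      simpa using this
    have hcv : f (y k) + ⟪g (y k), u - y k⟫ ≤ f u :=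
      grad_ineq f hfconv (g (y k)) (y k) u (hgrad (y k))
    have hsm := strong_min v hv ψ hψconv (g (y k)) (y k) (x (k + 1)) (hxmin k) u
    have hFu : F u ≤ (1 - θ k) * F (x k) + θ k * F xstar := by
      have h : F ((1 - θ k) • x k + θ k • xstar)
          ≤ (1 - θ k) • F (x k) + θ k • F xstar :=
        hFconv.2 (Set.mem_univ (x k)) (Set.mem_univ xstar) (by linarith) hθ0.le (by ring)
      rw [smul_eq_mul, smul_eq_mul] at h
      exact h
    have huy : u - y k = θ k • (xstar - z k) := by rw [hy k, hu]; module
    have hux : u - x (k + 1) = θ k • (xstar - z (k + 1)) := by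
      have hd : z (k + 1) - z k = (θ k)⁻¹ • (x (k + 1) - y k) := by
        rw [hz k]; abel
      have hx1 : x (k + 1) = y k + θ k • (z (k + 1) - z k) := by
        rw [hd, smul_smul, mul_inv_cancel₀ hθ0.ne', one_smul]; abel
      rw [hx1, hu, hy k]; module
    have hNuy : ∑ i, v i * ((u - y k) i) ^ 2
        = (θ k) ^ 2 * ∑ i, v i * ((xstar - z k) i) ^ 2 := by rw [huy, N_smul]
    have hNux : ∑ i, v i * ((u - x (k + 1)) i) ^ 2
        = (θ k) ^ 2 * ∑ i, v i * ((xstar - z (k + 1)) i) ^ 2 := by rw [hux, N_smul]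
    have hNsym : ∑ i, v i * ((x (k + 1) - u) i) ^ 2 = ∑ i, v i * ((u - x (k + 1)) i) ^ 2 :=
      N_sub_comm v _ _
    have hFx1 := hF (x (k + 1))
    have hFu' := hF u
    rw [hNuy, hNux] at hsm
    linarith
  set c0 := ∑ i, v i * ((xstar - z 0) i) ^ 2 with hc0def
  have lyap : ∀ k, F (x (k + 1)) - F xstar
      + (θ k) ^ 2 * (1 / 2) * (∑ i, v i * ((xstar - z (k + 1)) i) ^ 2)
      ≤ (θ k) ^ 2 * (1 / 2) * c0 := by
    intro k
    induction k with
    | zero =>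
      have h0 := key 0
      rw [hθinit] at h0 ⊢
      linarith
    | succ k ih =>
      have hk := key (k + 1)
      have hsq := hθsq k
      obtain ⟨h0, h1⟩ := hθ (k + 1)
      have e3 := mul_le_mul_of_nonneg_left ih (by linarith : (0:ℝ) ≤ 1 - θ (k + 1))
      nlinarith [hk, e3, hsq,
        mul_le_mul_of_nonneg_right hsq.le
          (N_nonneg v hv (xstar - z (k + 1))),
        mul_le_mul_of_nonneg_right hsq.ge
          (N_nonneg v hv (xstar - z (k + 1))),
        mul_le_mul_of_nonneg_right hsq.le (N_nonneg v hv (xstar - z 0)),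
        mul_le_mul_of_nonneg_right hsq.ge (N_nonneg v hv (xstar - z 0))]
  intro k hk
  obtain ⟨m, rfl⟩ : ∃ m, k = m + 1 := ⟨k - 1, (Nat.succ_pred_eq_of_pos hk).symm⟩
  simp only [Nat.add_sub_cancel]
  have hl := lyap m
  have hNm1 := N_nonneg v hv (xstar - z (m + 1))
  have hE : ∑ i, v i * ((x 0 - xstar) i) ^ 2 = c0 := by
    rw [hc0def, hzinit]; exact N_sub_comm v _ _
  have h2 : μ / 2 * c0 ≤ F (x 0) - F xstar := by
    have := hsc (x 0)
    rw [hE] at this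
    linarith
  have hc0 : (1 / 2) * c0 ≤ (1 / μ) * (F (x 0) - F xstar) := by
    calc (1 / 2) * c0 = (1 / μ) * (μ / 2 * c0) := by field_simp
      _ ≤ (1 / μ) * (F (x 0) - F xstar) :=
        mul_le_mul_of_nonneg_left h2 (by positivity)
  have hfin := mul_le_mul_of_nonneg_left hc0 (sq_nonneg (θ m))
  have hpos : 0 ≤ (θ m) ^ 2 * (1 / 2) * (∑ i, v i * ((xstar - z (m + 1)) i) ^ 2) := by
    positivity
  nlinarith [hl, hfin, hpos]
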